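/- Let a, b be natural numbers with a ≤ b. A natural number n belongs to the additive closure of the integer interval Set.Icc a b (i.e., n is a sum of a finite multiset of elements of [a,b], possibly empty) if and only if there exists a natural number k such that k*a ≤ n and n ≤ k*b. -/

import Mathlib

theorem mem_addClosure_Icc_iff (a b : ℕ) (hab : a ≤ b) (n : ℕ) :
    n ∈ AddSubmonoid.closure (Set.Icc a b) ↔ ∃ k : ℕ, k * a ≤ n ∧ n ≤ k * b := by
  constructor
  · intro hn
    induction hn using AddSubmonoid.closure_induction with
    | mem x hx => exact ⟨1, by simpa using hx.1, by simpa using hx.2⟩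
    | zero => exact ⟨0, by simp, by simp⟩
    | add x y _ _ hx hy =>
      obtain ⟨k1, h1, h2⟩ := hx
      obtain ⟨k2, h3, h4⟩ := hy
      exact ⟨k1 + k2, by rw [add_mul]; omega, by rw [add_mul]; omega⟩
  · rintro ⟨k, hka, hkb⟩
    induction k generalizing n with
    | zero =>
      have : n = 0 := by omega
      rw [this]; exact zero_mem _
    | succ k ih =>
      have hka' : k * a + a ≤ n := by have := Nat.add_one_mul k a; omega
      have hkb' : n ≤ k * b + b := by have := Nat.add_one_mul k b; omega
      have hmulab : k * a ≤ k * b := Nat.mul_le_mul_left k hab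
      set x := min b (n - k * a) with hx
      have hx1 : x ≤ b := min_le_left _ _
      have hx2 : x ≤ n - k * a := min_le_right _ _
      have hxmem : x ∈ Set.Icc a b := ⟨le_min hab (by omega), hx1⟩
      have h1 : k * a ≤ n - x := by omega
      have h2 : n - x ≤ k * b := by
        rcases min_cases b (n - k * a) with ⟨h, _⟩ | ⟨h, hle⟩ <;> omega
      have : n = x + (n - x) := by omega
      rw [this]
      exact add_mem (AddSubmonoid.subset_closure hxmem) (ih (n - x) h1 h2)
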